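/- Let V be a finite-dimensional complex Hilbert space, T ∈ B(V ⊗ F) symmetric with respect to a set of symmetries S each of the form S₁ ⊗ S₂ with S₂ leaving the vacuum Ω invariant, such that S₁ := {S₁ : S₁⊗S₂ ∈ S} acts irreducibly on V. Then the vacuum expectation ⟨T⟩_Ω is a multiple of the identity: ⟨T⟩_Ω = c·1_V for some c ∈ ℂ. -/

import Mathlib

open scoped ComplexConjugate InnerProductSpace

/-- The Hilbert sum `⊕_{i<d} F ≅ ℂ^d ⊗ F` is complete when `F` is. -/
instance piLpCompleteSpace {F : Type*} [NormedAddCommGroup F] [CompleteSpace F] (d : ℕ) :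
    CompleteSpace (PiLp 2 fun _ : Fin d => F) :=
  inferInstance

/-- A unitary map on a complex inner product space, given as a plain function. -/
def IsUnitaryMap {V : Type*} [NormedAddCommGroup V] [InnerProductSpace ℂ V]
    (S : V → V) : Prop :=
  Function.Bijective S ∧ (∀ x y : V, S (x + y) = S x + S y) ∧
    (∀ (a : ℂ) (x : V), S (a • x) = a • S x) ∧
    ∀ x y : V, (inner ℂ (S x) (S y) : ℂ) = inner ℂ x y

/-- An antiunitary map on a complex inner product space. -/
def IsAntiunitaryMap {V : Type*} [NormedAddCommGroup V] [InnerProductSpace ℂ V]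
    (S : V → V) : Prop :=
  Function.Bijective S ∧ (∀ x y : V, S (x + y) = S x + S y) ∧
    (∀ (a : ℂ) (x : V), S (a • x) = conj a • S x) ∧
    ∀ x y : V, (inner ℂ (S x) (S y) : ℂ) = conj (inner ℂ x y : ℂ)

/-- The embedding `v ↦ v ⊗ Ω` of `ℂ^d` into `ℂ^d ⊗ F ≅ F ⊕ … ⊕ F`. -/
noncomputable def tensorVacuum {F : Type*} [NormedAddCommGroup F] [InnerProductSpace ℂ F]
    (d : ℕ) (Ω : F) (v : EuclideanSpace ℂ (Fin d)) : PiLp 2 (fun _ : Fin d => F) :=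
  WithLp.toLp 2 (fun i => v i • Ω)

theorem schur_aux {d : ℕ} {α : Type*} (G : Set α)
    (act : α → (EuclideanSpace ℂ (Fin d) → EuclideanSpace ℂ (Fin d)))
    (hirr : ∀ W : Submodule ℂ (EuclideanSpace ℂ (Fin d)),
      (∀ g ∈ G, ∀ v ∈ W, act g v ∈ W) → W = ⊥ ∨ W = ⊤)
    (H : EuclideanSpace ℂ (Fin d) →L[ℂ] EuclideanSpace ℂ (Fin d))
    (hsa : ∀ x y : EuclideanSpace ℂ (Fin d), ⟪H x, y⟫_ℂ = ⟪x, H y⟫_ℂ)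
    (hinv : ∀ g ∈ G, ∀ (μ : ℝ) (v : EuclideanSpace ℂ (Fin d)),
      H v = (μ : ℂ) • v → H (act g v) = (μ : ℂ) • act g v) :
    ∃ μ : ℂ, ∀ v, H v = μ • v := by
  rcases subsingleton_or_nontrivial (EuclideanSpace ℂ (Fin d)) with hS | hN
  · exact ⟨0, fun v => Subsingleton.elim _ _⟩
  · obtain ⟨μ₀, hμ₀⟩ := Module.End.exists_eigenvalue (H : EuclideanSpace ℂ (Fin d) →ₗ[ℂ] EuclideanSpace ℂ (Fin d))
    obtain ⟨v, hv⟩ := hμ₀.exists_hasEigenvector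
    have hv0 : v ≠ 0 := hv.2
    have hHv : H v = μ₀ • v := hv.apply_eq_smul
    have hreal : (starRingEnd ℂ) μ₀ = μ₀ := by
      have h1 : ⟪H v, v⟫_ℂ = (starRingEnd ℂ) μ₀ * ⟪v, v⟫_ℂ := by
        rw [hHv, inner_smul_left]
      have h2 : ⟪v, H v⟫_ℂ = μ₀ * ⟪v, v⟫_ℂ := by
        rw [hHv, inner_smul_right]
      have h3 := hsa v v
      rw [h1, h2] at h3
      have hvv : (⟪v, v⟫_ℂ) ≠ 0 := inner_self_ne_zero.mpr hv0
      exact mul_right_cancel₀ hvv h3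
    set μ : ℝ := μ₀.re with hμ
    have hμ₀eq : μ₀ = (μ : ℂ) := by
      rw [hμ]
      exact (Complex.conj_eq_iff_re.mp hreal).symm
    have hW := hirr (Module.End.eigenspace (H : EuclideanSpace ℂ (Fin d) →ₗ[ℂ] EuclideanSpace ℂ (Fin d)) μ₀) ?_
    · rcases hW with hbot | htop
      · exact absurd (by simpa [hbot] using hv.1) hv0
      · refine ⟨μ₀, fun w => ?_⟩
        have : w ∈ Module.End.eigenspace (H : EuclideanSpace ℂ (Fin d) →ₗ[ℂ] EuclideanSpace ℂ (Fin d)) μ₀ := by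
          rw [htop]; trivial
        exact Module.End.mem_eigenspace_iff.mp this
    · intro g hg w hw
      rw [Module.End.mem_eigenspace_iff] at hw ⊢
      have hw' : H w = (μ : ℂ) • w := by rw [← hμ₀eq]; exact hw
      have := hinv g hg μ w hw'
      rw [hμ₀eq]
      exact this

/-- Let `T` be a bounded operator on `V ⊗ F` (`V = ℂ^d`) which is symmetric with respect to
a set `𝒮` of symmetries of the form `S = S₁ ⊗ S₂` (both unitary or both antiunitary), with
`S₂ Ω = Ω` — so that `S (v ⊗ Ω) = (S₁ v) ⊗ Ω` — and `S T S* = T` (resp. `= T*`).  If the set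
of first factors `S₁` acts irreducibly on `V`, then the vacuum expectation `⟨T⟩_Ω`,
characterized by `⟨v₁, ⟨T⟩_Ω v₂⟩ = ⟨v₁ ⊗ Ω, T (v₂ ⊗ Ω)⟩`, is a multiple of the identity. -/
theorem vacuum_expectation_is_scalar {F : Type*} [NormedAddCommGroup F]
    [InnerProductSpace ℂ F] [CompleteSpace F]
    (Ω : F) (hΩ : ‖Ω‖ = 1) (d : ℕ)
    (T : PiLp 2 (fun _ : Fin d => F) →L[ℂ] PiLp 2 (fun _ : Fin d => F))
    (𝒮 : Set ((EuclideanSpace ℂ (Fin d) → EuclideanSpace ℂ (Fin d)) ×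
      (PiLp 2 (fun _ : Fin d => F) → PiLp 2 (fun _ : Fin d => F))))
    (hsym : ∀ p ∈ 𝒮,
      (IsUnitaryMap p.1 ∧ IsUnitaryMap p.2 ∧
        ∀ x : PiLp 2 (fun _ : Fin d => F), p.2 (T x) = T (p.2 x)) ∨
      (IsAntiunitaryMap p.1 ∧ IsAntiunitaryMap p.2 ∧
        ∀ x : PiLp 2 (fun _ : Fin d => F),
          p.2 (T x) = (ContinuousLinearMap.adjoint T) (p.2 x)))
    (hvac : ∀ p ∈ 𝒮, ∀ v : EuclideanSpace ℂ (Fin d),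
      p.2 (tensorVacuum d Ω v) = tensorVacuum d Ω (p.1 v))
    (hirr : ∀ W : Submodule ℂ (EuclideanSpace ℂ (Fin d)),
      (∀ p ∈ 𝒮, ∀ v ∈ W, p.1 v ∈ W) → W = ⊥ ∨ W = ⊤)
    (M : EuclideanSpace ℂ (Fin d) →L[ℂ] EuclideanSpace ℂ (Fin d))
    (hM : ∀ v₁ v₂ : EuclideanSpace ℂ (Fin d),
      (inner ℂ v₁ (M v₂) : ℂ) = inner ℂ (tensorVacuum d Ω v₁) (T (tensorVacuum d Ω v₂))) :
    ∃ c : ℂ, M = c • ContinuousLinearMap.id ℂ (EuclideanSpace ℂ (Fin d)) := by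
  classical
  set M' := ContinuousLinearMap.adjoint M with hM'
  set tv := tensorVacuum (F := F) d Ω with htv
  -- Step 1: commutation relations
  have key : ∀ p ∈ 𝒮,
      ((∀ v, M (p.1 v) = p.1 (M v)) ∧ (∀ v, M' (p.1 v) = p.1 (M' v)) ∧ IsUnitaryMap p.1) ∨
      ((∀ v, M (p.1 v) = p.1 (M' v)) ∧ (∀ v, M' (p.1 v) = p.1 (M v)) ∧ IsAntiunitaryMap p.1) := by
    intro p hp
    rcases hsym p hp with ⟨u1, u2, hT⟩ | ⟨a1, a2, hT⟩
    · left
      have hsurj := u1.1.2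
      have h1 : ∀ v, M (p.1 v) = p.1 (M v) := by
        intro v₂
        apply ext_inner_left ℂ
        intro w
        obtain ⟨v₁, rfl⟩ := hsurj w
        calc ⟪p.1 v₁, M (p.1 v₂)⟫_ℂ
            = ⟪tv (p.1 v₁), T (tv (p.1 v₂))⟫_ℂ := hM _ _
          _ = ⟪p.2 (tv v₁), T (p.2 (tv v₂))⟫_ℂ := by rw [hvac p hp v₁, hvac p hp v₂]
          _ = ⟪p.2 (tv v₁), p.2 (T (tv v₂))⟫_ℂ := by rw [hT]
          _ = ⟪tv v₁, T (tv v₂)⟫_ℂ := u2.2.2.2 _ _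
          _ = ⟪v₁, M v₂⟫_ℂ := (hM _ _).symm
          _ = ⟪p.1 v₁, p.1 (M v₂)⟫_ℂ := (u1.2.2.2 _ _).symm
      refine ⟨h1, ?_, u1⟩
      intro v₂
      apply ext_inner_left ℂ
      intro w
      obtain ⟨v₁, rfl⟩ := hsurj w
      calc ⟪p.1 v₁, M' (p.1 v₂)⟫_ℂ
          = ⟪M (p.1 v₁), p.1 v₂⟫_ℂ := ContinuousLinearMap.adjoint_inner_right _ _ _
        _ = ⟪p.1 (M v₁), p.1 v₂⟫_ℂ := by rw [h1]
        _ = ⟪M v₁, v₂⟫_ℂ := u1.2.2.2 _ _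
        _ = ⟪v₁, M' v₂⟫_ℂ := (ContinuousLinearMap.adjoint_inner_right _ _ _).symm
        _ = ⟪p.1 v₁, p.1 (M' v₂)⟫_ℂ := (u1.2.2.2 _ _).symm
    · right
      have hsurj := a1.1.2
      have h1 : ∀ v, M (p.1 v) = p.1 (M' v) := by
        intro v₂
        apply ext_inner_left ℂ
        intro w
        obtain ⟨v₁, rfl⟩ := hsurj w
        calc ⟪p.1 v₁, M (p.1 v₂)⟫_ℂ
            = ⟪tv (p.1 v₁), T (tv (p.1 v₂))⟫_ℂ := hM _ _
          _ = ⟪p.2 (tv v₁), T (p.2 (tv v₂))⟫_ℂ := by rw [hvac p hp v₁, hvac p hp v₂]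
          _ = ⟪ContinuousLinearMap.adjoint T (p.2 (tv v₁)), p.2 (tv v₂)⟫_ℂ :=
              (ContinuousLinearMap.adjoint_inner_left _ _ _).symm
          _ = ⟪p.2 (T (tv v₁)), p.2 (tv v₂)⟫_ℂ := by rw [hT]
          _ = conj (⟪T (tv v₁), tv v₂⟫_ℂ) := a2.2.2.2 _ _
          _ = ⟪tv v₂, T (tv v₁)⟫_ℂ := inner_conj_symm _ _
          _ = ⟪v₂, M v₁⟫_ℂ := (hM _ _).symm
          _ = conj (⟪M v₁, v₂⟫_ℂ) := (inner_conj_symm _ _).symm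
          _ = conj (⟪v₁, M' v₂⟫_ℂ) := by rw [ContinuousLinearMap.adjoint_inner_right]
          _ = ⟪p.1 v₁, p.1 (M' v₂)⟫_ℂ := (a1.2.2.2 _ _).symm
      refine ⟨h1, ?_, a1⟩
      intro v₂
      apply ext_inner_left ℂ
      intro w
      obtain ⟨v₁, rfl⟩ := hsurj w
      calc ⟪p.1 v₁, M' (p.1 v₂)⟫_ℂ
          = ⟪M (p.1 v₁), p.1 v₂⟫_ℂ := ContinuousLinearMap.adjoint_inner_right _ _ _
        _ = ⟪p.1 (M' v₁), p.1 v₂⟫_ℂ := by rw [h1]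
        _ = conj (⟪M' v₁, v₂⟫_ℂ) := a1.2.2.2 _ _
        _ = conj (⟪v₁, M v₂⟫_ℂ) := by rw [ContinuousLinearMap.adjoint_inner_left]
        _ = ⟪p.1 v₁, p.1 (M v₂)⟫_ℂ := (a1.2.2.2 _ _).symm
  -- The two Hermitian parts
  set H₁ : EuclideanSpace ℂ (Fin d) →L[ℂ] EuclideanSpace ℂ (Fin d) := M + M' with hH₁
  set H₂ : EuclideanSpace ℂ (Fin d) →L[ℂ] EuclideanSpace ℂ (Fin d) := Complex.I • (M - M') with hH₂
  have hsa₁ : ∀ x y : EuclideanSpace ℂ (Fin d), ⟪H₁ x, y⟫_ℂ = ⟪x, H₁ y⟫_ℂ := by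
    intro x y
    simp only [hH₁, ContinuousLinearMap.add_apply, inner_add_left, inner_add_right, hM',
      ContinuousLinearMap.adjoint_inner_left, ContinuousLinearMap.adjoint_inner_right]
    ring
  have hsa₂ : ∀ x y : EuclideanSpace ℂ (Fin d), ⟪H₂ x, y⟫_ℂ = ⟪x, H₂ y⟫_ℂ := by
    intro x y
    simp only [hH₂, ContinuousLinearMap.smul_apply, ContinuousLinearMap.sub_apply,
      inner_smul_left, inner_smul_right, inner_sub_left, inner_sub_right, hM',
      ContinuousLinearMap.adjoint_inner_left, ContinuousLinearMap.adjoint_inner_right,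
      Complex.conj_I]
    ring
  -- commutation of the Hermitian parts with the symmetries
  have hcomm : ∀ p ∈ 𝒮, (∀ v, H₁ (p.1 v) = p.1 (H₁ v)) ∧ (∀ v, H₂ (p.1 v) = p.1 (H₂ v)) := by
    intro p hp
    rcases key p hp with ⟨h1, h2, u1⟩ | ⟨h1, h2, a1⟩
    · have hadd := u1.2.1
      have hsmul := u1.2.2.1
      have hsub : ∀ x y, p.1 (x - y) = p.1 x - p.1 y := by
        intro x y
        have : p.1 (x + (-1 : ℂ) • y) = p.1 x + (-1 : ℂ) • p.1 y := by
          rw [hadd, hsmul]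
        simpa [sub_eq_add_neg, neg_one_smul] using this
      constructor
      · intro v
        simp only [hH₁, ContinuousLinearMap.add_apply, h1, h2, hadd]
      · intro v
        simp only [hH₂, ContinuousLinearMap.smul_apply, ContinuousLinearMap.sub_apply,
          h1, h2]
        rw [← hsub, ← hsmul]
    · have hadd := a1.2.1
      have hsmul := a1.2.2.1
      have hsub : ∀ x y, p.1 (x - y) = p.1 x - p.1 y := by
        intro x y
        have : p.1 (x + (-1 : ℂ) • y) = p.1 x + conj (-1 : ℂ) • p.1 y := by
          rw [hadd, hsmul]
        simpa [sub_eq_add_neg, neg_one_smul] using this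
      constructor
      · intro v
        simp only [hH₁, ContinuousLinearMap.add_apply, h1, h2]
        rw [← hadd, add_comm (M' v)]
      · intro v
        simp only [hH₂, ContinuousLinearMap.smul_apply, ContinuousLinearMap.sub_apply,
          h1, h2]
        rw [← hsub]
        have : Complex.I • p.1 (M' v - M v) = p.1 ((-Complex.I) • (M' v - M v)) := by
          rw [hsmul]
          simp
        rw [this]
        congr 1
        rw [neg_smul, smul_sub, smul_sub, neg_sub]
  -- real-eigenvalue invariance
  have hinv : ∀ (H : EuclideanSpace ℂ (Fin d) →L[ℂ] EuclideanSpace ℂ (Fin d)),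
      (∀ p ∈ 𝒮, ∀ v, H (p.1 v) = p.1 (H v)) →
      ∀ p ∈ 𝒮, ∀ (μ : ℝ) (v : EuclideanSpace ℂ (Fin d)),
        H v = (μ : ℂ) • v → H (p.1 v) = (μ : ℂ) • p.1 v := by
    intro H hc p hp μ v hv
    rw [hc p hp v, hv]
    rcases key p hp with ⟨_, _, u1⟩ | ⟨_, _, a1⟩
    · rw [u1.2.2.1]
    · rw [a1.2.2.1, Complex.conj_ofReal]
  obtain ⟨μ₁, hμ₁⟩ := schur_aux 𝒮 Prod.fst hirr H₁ hsa₁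
    (hinv H₁ (fun p hp => (hcomm p hp).1))
  obtain ⟨μ₂, hμ₂⟩ := schur_aux 𝒮 Prod.fst hirr H₂ hsa₂
    (hinv H₂ (fun p hp => (hcomm p hp).2))
  refine ⟨(μ₁ - Complex.I * μ₂) / 2, ContinuousLinearMap.ext fun v => ?_⟩
  have e1 : M v + M' v = μ₁ • v := hμ₁ v
  have e2 : Complex.I • (M v - M' v) = μ₂ • v := by
    have := hμ₂ v
    simpa [hH₂, ContinuousLinearMap.smul_apply, ContinuousLinearMap.sub_apply] using this
  have e2' : M v - M' v = (-Complex.I * μ₂) • v := by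
    have := congrArg (fun x => (-Complex.I) • x) e2
    simp only [smul_smul] at this
    rw [show (-Complex.I) * Complex.I = 1 by simp [Complex.I_mul_I], one_smul] at this
    rw [this]
  have e3 : (2 : ℂ) • M v = (μ₁ + -Complex.I * μ₂) • v := by
    have := congrArg₂ (· + ·) e1 e2'
    simp only [add_smul] at this ⊢
    calc (2 : ℂ) • M v = (M v + M' v) + (M v - M' v) := by module
      _ = μ₁ • v + (-Complex.I * μ₂) • v := this
  have : M v = ((μ₁ - Complex.I * μ₂) / 2) • v := by
    have := congrArg (fun x => (2⁻¹ : ℂ) • x) e3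
    simp only [smul_smul] at this
    norm_num at this
    rw [this]
    congr 1
    ring
  simpa using this
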